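/- arXiv:2104.01270 — 2 statements merged into one kernel-verified Lean document; each statement's English description precedes it below -/
import Mathlib

section
/- Chaotic iteration soundness for acyclic flow graphs: let a program be a finite DAG with entry ℓ₀, edges labelled by statements, and define the abstract invariant map I : Loc → Σ♯ by I(ℓ₀) = φ₀ and I(ℓ) = the join over all incoming edges (ℓ' →s ℓ) of ⟦s⟧♯(I(ℓ')). If the abstract interpreter is locally sound and σ₀ ⊨ φ₀, then every concrete state reachable at location ℓ (by executing the statements along some path from ℓ₀ to ℓ starting at σ₀) models I(ℓ). -/
/-- Concrete reachability: σ is reachable at ℓ by executing the statements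
along some path from the entry ℓ₀ starting at σ₀. -/
inductive Reach {Loc Stmt Cst : Type*} (edges : Finset (Loc × Stmt × Loc))
    (csem : Stmt → Cst → Option Cst) (ℓ0 : Loc) (σ0 : Cst) : Loc → Cst → Prop
  | entry : Reach edges csem ℓ0 σ0 ℓ0 σ0
  | step {ℓ' : Loc} {σ : Cst} {s : Stmt} {ℓ : Loc} {σ' : Cst} :
      Reach edges csem ℓ0 σ0 ℓ' σ → (ℓ', s, ℓ) ∈ edges →
      csem s σ = some σ' → Reach edges csem ℓ0 σ0 ℓ σ'

/-- chaotic iteration soundness for acyclic flow graphs. -/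
theorem chaotic_iteration_sound_acyclic
    {Loc Stmt Cst Abs : Type*} [Fintype Loc] [DecidableEq Loc]
    [SemilatticeSup Abs] [OrderBot Abs]
    (edges : Finset (Loc × Stmt × Loc)) (ℓ0 : Loc)
    (γ : Abs → Set Cst)
    (hγmono : ∀ a b : Abs, a ≤ b → γ a ⊆ γ b)
    (hγsup : ∀ a b : Abs, γ a ∪ γ b ⊆ γ (a ⊔ b))
    (csem : Stmt → Cst → Option Cst) (asem : Stmt → Abs → Abs)
    (hsound : ∀ (σ : Cst) (φ : Abs) (s : Stmt) (σ' : Cst),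
      σ ∈ γ φ → csem s σ = some σ' → σ' ∈ γ (asem s φ))
    (hacyc : Irreflexive
      (Relation.TransGen (fun ℓ' ℓ : Loc => ∃ s, (ℓ', s, ℓ) ∈ edges)))
    (hentry : ∀ (ℓ' : Loc) (s : Stmt), (ℓ', s, ℓ0) ∉ edges)
    (σ0 : Cst) (φ0 : Abs) (h0 : σ0 ∈ γ φ0)
    (I : Loc → Abs) (hI0 : I ℓ0 = φ0)
    (hIeq : ∀ ℓ : Loc, ℓ ≠ ℓ0 →
      I ℓ = (edges.filter (fun e => e.2.2 = ℓ)).sup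
              (fun e => asem e.2.1 (I e.1))) :
    ∀ (ℓ : Loc) (σ : Cst), Reach edges csem ℓ0 σ0 ℓ σ → σ ∈ γ (I ℓ) := by
  intro ℓ σ h
  induction h with
  | entry => rw [hI0]; exact h0
  | @step ℓ' σ s ℓ σ' _ hedge hsem ih =>
    have hne : ℓ ≠ ℓ0 := by
      rintro rfl; exact hentry ℓ' s hedge
    have hle : asem s (I ℓ') ≤ I ℓ := by
      rw [hIeq ℓ hne]
      exact Finset.le_sup (s := edges.filter (fun e => e.2.2 = ℓ))
        (f := fun e : Loc × Stmt × Loc => asem e.2.1 (I e.1))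
        (b := (ℓ', s, ℓ)) (Finset.mem_filter.mpr ⟨hedge, rfl⟩)
    exact hγmono _ _ hle (hsound σ (I ℓ') s σ' ih hsem)
end

section
/- Dirtying correctness for acyclic dependency graphs: let G be a finite DAG with a value assignment consistent at every node (each non-input node's value equals the function of its predecessors' values). If an input node n is edited and all nodes forward-reachable from n are emptied (set to none), then for every node m not forward-reachable from n and distinct from n, the retained value at m is still consistent with the edited graph (i.e., equals the value recomputed from scratch in the edited graph). -/
/-- dirtying correctness for acyclic dependency graphs: after
editing input node n, the from-scratch assignment of the edited graph agrees
with the old assignment on every node not forward-reachable from n (and ≠ n). -/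
theorem dirtying_correct {V Val : Type*} [Fintype V]
    (E : V → V → Prop) (hacyc : Irreflexive (Relation.TransGen E))
    (inp : V → Prop) (hinp : ∀ v, inp v → ∀ u, ¬ E u v)
    (f : V → (V → Val) → Val)
    (hf : ∀ (v : V) (g g' : V → Val), (∀ u, E u v → g u = g' u) → f v g = f v g')
    (n : V) (hn : inp n)
    (A A' : V → Val)
    (hA : ∀ v, ¬ inp v → A v = f v A)
    (hA' : ∀ v, ¬ inp v → A' v = f v A')
    (hagree : ∀ v, inp v → v ≠ n → A' v = A v) :
    ∀ m : V, ¬ Relation.TransGen E n m → m ≠ n → A' m = A m := by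
  have hwf : WellFounded E := by
    have : WellFounded (Relation.TransGen E) :=
      @Finite.wellFounded_of_trans_of_irrefl _ _ _ ⟨fun _ _ _ => Relation.TransGen.trans⟩ ⟨hacyc⟩
    exact Subrelation.wf (fun h => Relation.TransGen.single h) this
  intro m
  induction m using hwf.induction with
  | _ m ih =>
    intro hnr hne
    by_cases him : inp m
    · exact hagree m him hne
    · rw [hA' m him, hA m him]
      apply hf
      intro u hu
      have hur : ¬ Relation.TransGen E n u := fun h =>
        hnr (h.tail hu)
      have hune : u ≠ n := fun h =>
        hnr (Relation.TransGen.single (h ▸ hu))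
      exact ih u hu hur hune
end
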